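/- Let A be a 2×2 symmetric positive semidefinite real matrix, let C_f > 0, and let f: ℍ × ℝ² → ℝ satisfy |f(p,ξ)| ≤ C_f(1 + |ξ|) for all p ∈ ℍ and ξ ∈ ℝ². Then for every C > 0 and β > 0 there exists α₀ > 0 such that for all α ≥ α₀: the smooth function ū(p,t) = C·e^{αt + β⟨p⟩} + C_f·t satisfies ∂_t ū − tr(A·(∇_H²ū)*) + f(p, ∇_H ū) ≥ 0 at every (p,t) ∈ ℍ × (0,∞), and the function u̲(p,t) = −C·e^{αt + β⟨p⟩} − C_f·t satisfies ∂_t u̲ − tr(A·(∇_H²u̲)*) + f(p, ∇_H u̲) ≤ 0 at every (p,t) ∈ ℍ × (0,∞). (Here the horizontal derivatives act on the space variable.) -/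

import Mathlib

noncomputable section

/-- The Heisenberg group as a set: `ℝ³` with coordinates `(x, y, z)`. -/
abbrev Heis : Type := ℝ × ℝ × ℝ

/-- The Heisenberg group multiplication. -/
def Hmul (p q : Heis) : Heis :=
  (p.1 + q.1, p.2.1 + q.2.1, p.2.2 + q.2.2 + (p.1 * q.2.1 - q.1 * p.2.1) / 2)

/-- The Heisenberg group inverse. -/
def Hinv (p : Heis) : Heis := (-p.1, -p.2.1, -p.2.2)

/-- The Korányi gauge `|p|_G = ((x² + y²)² + 16 z²)^(1/4)`. -/
def kGauge (p : Heis) : ℝ := ((p.1 ^ 2 + p.2.1 ^ 2) ^ 2 + 16 * p.2.2 ^ 2) ^ ((1 : ℝ) / 4)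

/-- The left-invariant gauge metric `d_L(p,q) = |p⁻¹·q|_G`. -/
def dL (p q : Heis) : ℝ := kGauge (Hmul (Hinv p) q)

/-- The right-invariant gauge metric `d_R(p,q) = |p·q⁻¹|_G`. -/
def dR (p q : Heis) : ℝ := kGauge (Hmul p (Hinv q))

/-- The horizontal vector field `X₁ = ∂ₓ - (y/2)∂_z` applied to `f` at `p`. -/
def X1 (f : Heis → ℝ) (p : Heis) : ℝ := fderiv ℝ f p (1, 0, -p.2.1 / 2)

/-- The horizontal vector field `X₂ = ∂_y + (x/2)∂_z` applied to `f` at `p`. -/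
def X2 (f : Heis → ℝ) (p : Heis) : ℝ := fderiv ℝ f p (0, 1, p.1 / 2)

/-- The symmetrized horizontal Hessian `(∇_H² f)*`. -/
def hessH (f : Heis → ℝ) (p : Heis) : Matrix (Fin 2) (Fin 2) ℝ :=
  !![X1 (X1 f) p, (X1 (X2 f) p + X2 (X1 f) p) / 2;
     (X1 (X2 f) p + X2 (X1 f) p) / 2, X2 (X2 f) p]

/-- `⟨p⟩ = (1 + x⁴ + y⁴ + 16z²)^(1/4)`. -/
def bracket (p : Heis) : ℝ := (1 + p.1 ^ 4 + p.2.1 ^ 4 + 16 * p.2.2 ^ 2) ^ ((1 : ℝ) / 4)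

namespace ExpBarrier

def pr1 : Heis →L[ℝ] ℝ := ContinuousLinearMap.fst ℝ ℝ (ℝ × ℝ)
def pr2 : Heis →L[ℝ] ℝ := (ContinuousLinearMap.fst ℝ ℝ ℝ).comp (ContinuousLinearMap.snd ℝ ℝ (ℝ × ℝ))
def pr3 : Heis →L[ℝ] ℝ := (ContinuousLinearMap.snd ℝ ℝ ℝ).comp (ContinuousLinearMap.snd ℝ ℝ (ℝ × ℝ))

@[simp] lemma pr1_apply (v : Heis) : pr1 v = v.1 := rfl
@[simp] lemma pr2_apply (v : Heis) : pr2 v = v.2.1 := rfl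
@[simp] lemma pr3_apply (v : Heis) : pr3 v = v.2.2 := rfl

lemma hx (p : Heis) : HasFDerivAt (fun q : Heis => q.1) pr1 p := hasFDerivAt_fst
lemma hy (p : Heis) : HasFDerivAt (fun q : Heis => q.2.1) pr2 p := hasFDerivAt_fst.comp p hasFDerivAt_snd
lemma hz (p : Heis) : HasFDerivAt (fun q : Heis => q.2.2) pr3 p := hasFDerivAt_snd.comp p hasFDerivAt_snd

lemma hpow (n : ℕ) (g : Heis → ℝ) (L : Heis →L[ℝ] ℝ) (p : Heis) (h : HasFDerivAt g L p) :
    HasFDerivAt (fun q => g q ^ n) ((n * g p ^ (n - 1)) • L) p := by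
  exact_mod_cast (hasDerivAt_pow n (g p)).comp_hasFDerivAt p h

def Fp (p : Heis) : ℝ := 1 + p.1 ^ 4 + p.2.1 ^ 4 + 16 * p.2.2 ^ 2

lemma one_le_Fp (p : Heis) : 1 ≤ Fp p := by
  unfold Fp; nlinarith [sq_nonneg (p.1 ^ 2), sq_nonneg (p.2.1 ^ 2), sq_nonneg p.2.2]

lemma Fp_pos (p : Heis) : 0 < Fp p := lt_of_lt_of_le one_pos (one_le_Fp p)

def LF (p : Heis) : Heis →L[ℝ] ℝ := (4 * p.1 ^ 3) • pr1 + (4 * p.2.1 ^ 3) • pr2 + (32 * p.2.2) • pr3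

lemma hFp (p : Heis) : HasFDerivAt Fp (LF p) p := by
  have h := (((hpow 4 _ _ p (hx p)).const_add 1).add (hpow 4 _ _ p (hy p))).add
    ((hpow 2 _ _ p (hz p)).const_mul 16)
  refine h.congr_fderiv ?_
  refine ContinuousLinearMap.ext fun v => ?_
  simp [LF]; ring

lemma bracket_eq (p : Heis) : bracket p = Fp p ^ ((1 : ℝ) / 4) := rfl

lemma bracket_pow4 (p : Heis) : bracket p ^ 4 = Fp p := by
  rw [bracket_eq, ← Real.rpow_natCast (Fp p ^ ((1 : ℝ) / 4)) 4, ← Real.rpow_mul (Fp_pos p).le]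
  norm_num

lemma one_le_bracket (p : Heis) : 1 ≤ bracket p :=
  Real.one_le_rpow (one_le_Fp p) (by norm_num)

lemma bracket_pos (p : Heis) : 0 < bracket p := lt_of_lt_of_le one_pos (one_le_bracket p)

lemma abs_x_le (p : Heis) : |p.1| ≤ bracket p := by
  refine le_of_pow_le_pow_left₀ (n := 4) (by norm_num) (bracket_pos p).le ?_
  rw [bracket_pow4]
  have h : |p.1| ^ 4 = p.1 ^ 4 := by rw [← abs_pow]; exact abs_of_nonneg (by positivity)
  rw [h]; unfold Fp; nlinarith [sq_nonneg (p.2.1 ^ 2), sq_nonneg p.2.2]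

lemma abs_y_le (p : Heis) : |p.2.1| ≤ bracket p := by
  refine le_of_pow_le_pow_left₀ (n := 4) (by norm_num) (bracket_pos p).le ?_
  rw [bracket_pow4]
  have h : |p.2.1| ^ 4 = p.2.1 ^ 4 := by rw [← abs_pow]; exact abs_of_nonneg (by positivity)
  rw [h]; unfold Fp; nlinarith [sq_nonneg (p.1 ^ 2), sq_nonneg p.2.2]

lemma abs_z_le (p : Heis) : 4 * |p.2.2| ≤ bracket p ^ 2 := by
  refine le_of_pow_le_pow_left₀ (n := 2) (by norm_num) (by positivity) ?_
  rw [← pow_mul]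
  have h : (4 * |p.2.2|) ^ 2 = 16 * p.2.2 ^ 2 := by rw [mul_pow, sq_abs]; ring
  rw [h, show 2*2 = 4 from rfl, bracket_pow4]; unfold Fp
  nlinarith [sq_nonneg (p.1 ^ 2), sq_nonneg (p.2.1 ^ 2)]

lemma Fp_rpow_m34 (p : Heis) : Fp p ^ ((1 : ℝ) / 4 - 1) = (bracket p ^ 3)⁻¹ := by
  have h := (Fp_pos p).le
  rw [show (1 : ℝ) / 4 - 1 = (1 / 4) * (-3) by norm_num, Real.rpow_mul h,
    show ((-3 : ℝ)) = ((-3 : ℤ) : ℝ) by norm_num, Real.rpow_intCast,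
    zpow_neg, show ((3:ℤ)) = ((3:ℕ):ℤ) from rfl, zpow_natCast]
  rfl

lemma Fp_rpow_m74 (p : Heis) : Fp p ^ ((1 : ℝ) / 4 - 1 - 1) = (bracket p ^ 7)⁻¹ := by
  have h := (Fp_pos p).le
  rw [show (1 : ℝ) / 4 - 1 - 1 = (1 / 4) * (-7) by norm_num, Real.rpow_mul h,
    show ((-7 : ℝ)) = ((-7 : ℤ) : ℝ) by norm_num, Real.rpow_intCast,
    zpow_neg, show ((7:ℤ)) = ((7:ℕ):ℤ) from rfl, zpow_natCast]
  rfl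

def Lb (p : Heis) : Heis →L[ℝ] ℝ := ((1 : ℝ) / 4 * Fp p ^ ((1 : ℝ) / 4 - 1)) • LF p

lemma hbracket (p : Heis) : HasFDerivAt bracket (Lb p) p :=
  (Real.hasDerivAt_rpow_const (Or.inl (Fp_pos p).ne')).comp_hasFDerivAt p (hFp p)

def v1 (p : Heis) : Heis := (1, 0, -p.2.1 / 2)
def v2 (p : Heis) : Heis := (0, 1, p.1 / 2)

def N1 (p : Heis) : ℝ := p.1 ^ 3 - 4 * (p.2.1 * p.2.2)
def N2 (p : Heis) : ℝ := p.2.1 ^ 3 + 4 * (p.1 * p.2.2)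
def G1 (p : Heis) : ℝ := N1 p * Fp p ^ ((1 : ℝ) / 4 - 1)
def G2 (p : Heis) : ℝ := N2 p * Fp p ^ ((1 : ℝ) / 4 - 1)

lemma Lb_v1 (p : Heis) : Lb p (v1 p) = G1 p := by
  simp only [Lb, LF, v1, G1, N1, ContinuousLinearMap.smul_apply, ContinuousLinearMap.add_apply,
    smul_eq_mul, pr1_apply, pr2_apply, pr3_apply]
  ring

lemma Lb_v2 (p : Heis) : Lb p (v2 p) = G2 p := by
  simp only [Lb, LF, v2, G2, N2, ContinuousLinearMap.smul_apply, ContinuousLinearMap.add_apply,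
    smul_eq_mul, pr1_apply, pr2_apply, pr3_apply]
  ring

def LN1 (p : Heis) : Heis →L[ℝ] ℝ := (3 * p.1 ^ 2) • pr1 + (-(4 * p.2.2)) • pr2 + (-(4 * p.2.1)) • pr3
def LN2 (p : Heis) : Heis →L[ℝ] ℝ := (4 * p.2.2) • pr1 + (3 * p.2.1 ^ 2) • pr2 + (4 * p.1) • pr3

lemma hN1 (p : Heis) : HasFDerivAt N1 (LN1 p) p := by
  have h := (hpow 3 _ _ p (hx p)).sub (((hy p).mul (hz p)).const_mul 4)
  refine h.congr_fderiv ?_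
  refine ContinuousLinearMap.ext fun v => ?_
  simp [LN1]; ring

lemma hN2 (p : Heis) : HasFDerivAt N2 (LN2 p) p := by
  have h := (hpow 3 _ _ p (hy p)).add (((hx p).mul (hz p)).const_mul 4)
  refine h.congr_fderiv ?_
  refine ContinuousLinearMap.ext fun v => ?_
  simp [LN2]; ring

def LG1 (p : Heis) : Heis →L[ℝ] ℝ :=
  (Fp p ^ ((1 : ℝ) / 4 - 1)) • LN1 p + (N1 p * (((1 : ℝ) / 4 - 1) * Fp p ^ ((1 : ℝ) / 4 - 1 - 1))) • LF p
def LG2 (p : Heis) : Heis →L[ℝ] ℝ :=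
  (Fp p ^ ((1 : ℝ) / 4 - 1)) • LN2 p + (N2 p * (((1 : ℝ) / 4 - 1) * Fp p ^ ((1 : ℝ) / 4 - 1 - 1))) • LF p

lemma hrpow_e (p : Heis) : HasFDerivAt (fun q => Fp q ^ ((1 : ℝ) / 4 - 1))
    ((((1 : ℝ) / 4 - 1) * Fp p ^ ((1 : ℝ) / 4 - 1 - 1)) • LF p) p :=
  (Real.hasDerivAt_rpow_const (Or.inl (Fp_pos p).ne')).comp_hasFDerivAt p (hFp p)

lemma hG1 (p : Heis) : HasFDerivAt G1 (LG1 p) p := by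
  have h := (hN1 p).mul (hrpow_e p)
  refine h.congr_fderiv ?_
  refine ContinuousLinearMap.ext fun v => ?_
  simp [LG1, smul_smul]; ring

lemma hG2 (p : Heis) : HasFDerivAt G2 (LG2 p) p := by
  have h := (hN2 p).mul (hrpow_e p)
  refine h.congr_fderiv ?_
  refine ContinuousLinearMap.ext fun v => ?_
  simp [LG2, smul_smul]; ring

lemma abs_N1_le (p : Heis) : |N1 p| ≤ 2 * bracket p ^ 3 := by
  have hb := bracket_pos p
  have h := abs_add_le (p.1 ^ 3) (-(4 * (p.2.1 * p.2.2)))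
  rw [← sub_eq_add_neg, abs_neg] at h
  have h1 : |p.1 ^ 3| ≤ bracket p ^ 3 := by
    rw [abs_pow]; exact pow_le_pow_left₀ (abs_nonneg _) (abs_x_le p) 3
  have h2 : |4 * (p.2.1 * p.2.2)| ≤ bracket p ^ 3 := by
    have : |4 * (p.2.1 * p.2.2)| = |p.2.1| * (4 * |p.2.2|) := by
      rw [abs_mul, abs_mul]; norm_num; ring
    rw [this]
    calc |p.2.1| * (4 * |p.2.2|) ≤ bracket p * bracket p ^ 2 :=
          mul_le_mul (abs_y_le p) (abs_z_le p) (by positivity) hb.le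
      _ = bracket p ^ 3 := by ring
  calc |N1 p| ≤ |p.1 ^ 3| + |4 * (p.2.1 * p.2.2)| := h
    _ ≤ 2 * bracket p ^ 3 := by linarith

lemma abs_N2_le (p : Heis) : |N2 p| ≤ 2 * bracket p ^ 3 := by
  have hb := bracket_pos p
  have h := abs_add_le (p.2.1 ^ 3) (4 * (p.1 * p.2.2))
  have h1 : |p.2.1 ^ 3| ≤ bracket p ^ 3 := by
    rw [abs_pow]; exact pow_le_pow_left₀ (abs_nonneg _) (abs_y_le p) 3
  have h2 : |4 * (p.1 * p.2.2)| ≤ bracket p ^ 3 := by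
    have : |4 * (p.1 * p.2.2)| = |p.1| * (4 * |p.2.2|) := by
      rw [abs_mul, abs_mul]; norm_num; ring
    rw [this]
    calc |p.1| * (4 * |p.2.2|) ≤ bracket p * bracket p ^ 2 :=
          mul_le_mul (abs_x_le p) (abs_z_le p) (by positivity) hb.le
      _ = bracket p ^ 3 := by ring
  calc |N2 p| ≤ |p.2.1 ^ 3| + |4 * (p.1 * p.2.2)| := h
    _ ≤ 2 * bracket p ^ 3 := by linarith

lemma abs_G1_le (p : Heis) : |G1 p| ≤ 2 := by
  have hb := bracket_pos p
  rw [G1, Fp_rpow_m34, abs_mul, abs_of_pos (by positivity : (0:ℝ) < (bracket p ^ 3)⁻¹)]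
  calc |N1 p| * (bracket p ^ 3)⁻¹ ≤ (2 * bracket p ^ 3) * (bracket p ^ 3)⁻¹ := by
        gcongr; exact abs_N1_le p
    _ = 2 := by field_simp
lemma abs_G2_le (p : Heis) : |G2 p| ≤ 2 := by
  have hb := bracket_pos p
  rw [G2, Fp_rpow_m34, abs_mul, abs_of_pos (by positivity : (0:ℝ) < (bracket p ^ 3)⁻¹)]
  calc |N2 p| * (bracket p ^ 3)⁻¹ ≤ (2 * bracket p ^ 3) * (bracket p ^ 3)⁻¹ := by
        gcongr; exact abs_N2_le p
    _ = 2 := by field_simp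

lemma LN1_v1 (p : Heis) : LN1 p (v1 p) = 3 * p.1 ^ 2 + 2 * p.2.1 ^ 2 := by
  simp [LN1, v1]; ring
lemma LN1_v2 (p : Heis) : LN1 p (v2 p) = -(4 * p.2.2) - 2 * (p.1 * p.2.1) := by
  simp [LN1, v2]; ring
lemma LN2_v1 (p : Heis) : LN2 p (v1 p) = 4 * p.2.2 - 2 * (p.1 * p.2.1) := by
  simp [LN2, v1]; ring
lemma LN2_v2 (p : Heis) : LN2 p (v2 p) = 3 * p.2.1 ^ 2 + 2 * p.1 ^ 2 := by
  simp [LN2, v2]; ring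
lemma LF_v1 (p : Heis) : LF p (v1 p) = 4 * p.1 ^ 3 - 16 * (p.2.1 * p.2.2) := by
  simp [LF, v1]; ring
lemma LF_v2 (p : Heis) : LF p (v2 p) = 4 * p.2.1 ^ 3 + 16 * (p.1 * p.2.2) := by
  simp [LF, v2]; ring

lemma sq_le_bracket_sq (p : Heis) : p.1 ^ 2 ≤ bracket p ^ 2 ∧ p.2.1 ^ 2 ≤ bracket p ^ 2 := by
  constructor
  · calc p.1 ^ 2 = |p.1| ^ 2 := (sq_abs _).symm
      _ ≤ bracket p ^ 2 := pow_le_pow_left₀ (abs_nonneg _) (abs_x_le p) 2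
  · calc p.2.1 ^ 2 = |p.2.1| ^ 2 := (sq_abs _).symm
      _ ≤ bracket p ^ 2 := pow_le_pow_left₀ (abs_nonneg _) (abs_y_le p) 2

lemma abs_LN1_v1_le (p : Heis) : |LN1 p (v1 p)| ≤ 5 * bracket p ^ 2 := by
  obtain ⟨h1, h2⟩ := sq_le_bracket_sq p
  rw [LN1_v1, abs_of_nonneg (by positivity)]; linarith
lemma abs_LN2_v2_le (p : Heis) : |LN2 p (v2 p)| ≤ 5 * bracket p ^ 2 := by
  obtain ⟨h1, h2⟩ := sq_le_bracket_sq p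
  rw [LN2_v2, abs_of_nonneg (by positivity)]; linarith

lemma abs_xy_le (p : Heis) : |p.1 * p.2.1| ≤ bracket p ^ 2 := by
  rw [abs_mul]
  calc |p.1| * |p.2.1| ≤ bracket p * bracket p :=
        mul_le_mul (abs_x_le p) (abs_y_le p) (abs_nonneg _) (bracket_pos p).le
    _ = bracket p ^ 2 := by ring

lemma abs_LN1_v2_le (p : Heis) : |LN1 p (v2 p)| ≤ 5 * bracket p ^ 2 := by
  rw [LN1_v2]
  have h := abs_sub (-(4 * p.2.2)) (2 * (p.1 * p.2.1))
  have h1 : |(-(4 * p.2.2))| = 4 * |p.2.2| := by rw [abs_neg, abs_mul]; norm_num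
  have h2 : |2 * (p.1 * p.2.1)| = 2 * |p.1 * p.2.1| := by rw [abs_mul]; norm_num
  have := abs_z_le p
  have := abs_xy_le p
  have hb := sq_nonneg (bracket p)
  rw [h1, h2] at h
  linarith [abs_nonneg (p.1 * p.2.1)]

lemma abs_LN2_v1_le (p : Heis) : |LN2 p (v1 p)| ≤ 5 * bracket p ^ 2 := by
  rw [LN2_v1]
  have h := abs_sub (4 * p.2.2) (2 * (p.1 * p.2.1))
  have h1 : |(4 * p.2.2)| = 4 * |p.2.2| := by rw [abs_mul]; norm_num
  have h2 : |2 * (p.1 * p.2.1)| = 2 * |p.1 * p.2.1| := by rw [abs_mul]; norm_num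
  have := abs_z_le p
  have := abs_xy_le p
  have hb := sq_nonneg (bracket p)
  rw [h1, h2] at h
  linarith

lemma abs_LF_v1_le (p : Heis) : |LF p (v1 p)| ≤ 8 * bracket p ^ 3 := by
  rw [LF_v1]
  have h := abs_add_le (4 * p.1 ^ 3) (-(16 * (p.2.1 * p.2.2)))
  rw [← sub_eq_add_neg, abs_neg] at h
  have h1 : |4 * p.1 ^ 3| ≤ 4 * bracket p ^ 3 := by
    rw [abs_mul, abs_pow]
    have := pow_le_pow_left₀ (abs_nonneg p.1) (abs_x_le p) 3
    norm_num; linarith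
  have h2 : |16 * (p.2.1 * p.2.2)| ≤ 4 * bracket p ^ 3 := by
    have e : |16 * (p.2.1 * p.2.2)| = 4 * (|p.2.1| * (4 * |p.2.2|)) := by
      rw [abs_mul, abs_mul]; norm_num; ring
    rw [e]
    have := mul_le_mul (abs_y_le p) (abs_z_le p) (by positivity) (bracket_pos p).le
    nlinarith
  calc |4 * p.1 ^ 3 - 16 * (p.2.1 * p.2.2)| ≤ |4 * p.1 ^ 3| + |16 * (p.2.1 * p.2.2)| := h
    _ ≤ 8 * bracket p ^ 3 := by linarith

lemma abs_LF_v2_le (p : Heis) : |LF p (v2 p)| ≤ 8 * bracket p ^ 3 := by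
  rw [LF_v2]
  have h := abs_add_le (4 * p.2.1 ^ 3) (16 * (p.1 * p.2.2))
  have h1 : |4 * p.2.1 ^ 3| ≤ 4 * bracket p ^ 3 := by
    rw [abs_mul, abs_pow]
    have := pow_le_pow_left₀ (abs_nonneg p.2.1) (abs_y_le p) 3
    norm_num; linarith
  have h2 : |16 * (p.1 * p.2.2)| ≤ 4 * bracket p ^ 3 := by
    have e : |16 * (p.1 * p.2.2)| = 4 * (|p.1| * (4 * |p.2.2|)) := by
      rw [abs_mul, abs_mul]; norm_num; ring
    rw [e]
    have := mul_le_mul (abs_x_le p) (abs_z_le p) (by positivity) (bracket_pos p).le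
    nlinarith
  calc |4 * p.2.1 ^ 3 + 16 * (p.1 * p.2.2)| ≤ |4 * p.2.1 ^ 3| + |16 * (p.1 * p.2.2)| := h
    _ ≤ 8 * bracket p ^ 3 := by linarith

lemma main_bound {b u w1 w2 : ℝ} (hb : 1 ≤ b) (h1 : |u| ≤ 5 * b ^ 2)
    (h2 : |w1| ≤ 2 * b ^ 3) (h3 : |w2| ≤ 8 * b ^ 3) :
    |(b ^ 3)⁻¹ * u + w1 * (((1:ℝ)/4 - 1) * (b ^ 7)⁻¹) * w2| ≤ 17 := by
  have hb0 : (0:ℝ) < b := lt_of_lt_of_le one_pos hb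
  have e3 : (0:ℝ) < b ^ 3 := by positivity
  have e7 : (0:ℝ) < b ^ 7 := by positivity
  have step1 : |(b ^ 3)⁻¹ * u| ≤ 5 / b := by
    rw [abs_mul, abs_of_pos (inv_pos.mpr e3)]
    calc (b ^ 3)⁻¹ * |u| ≤ (b ^ 3)⁻¹ * (5 * b ^ 2) := by gcongr
      _ = 5 / b := by field_simp
  have step2 : |w1 * (((1:ℝ)/4 - 1) * (b ^ 7)⁻¹) * w2| ≤ 12 / b := by
    rw [abs_mul, abs_mul]
    have hc : |((1:ℝ)/4 - 1) * (b ^ 7)⁻¹| = (3/4) * (b ^ 7)⁻¹ := by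
      rw [abs_mul, abs_of_pos (inv_pos.mpr e7)]
      norm_num
    rw [hc]
    calc |w1| * (3 / 4 * (b ^ 7)⁻¹) * |w2|
        ≤ (2 * b ^ 3) * (3 / 4 * (b ^ 7)⁻¹) * (8 * b ^ 3) := by
          gcongr <;> positivity
      _ = 12 / b := by field_simp; ring
  have h5 : 5 / b ≤ 5 := div_le_self (by norm_num) hb
  have h12 : 12 / b ≤ 12 := div_le_self (by norm_num) hb
  calc |(b ^ 3)⁻¹ * u + w1 * (((1:ℝ)/4 - 1) * (b ^ 7)⁻¹) * w2|
      ≤ |(b ^ 3)⁻¹ * u| + |w1 * (((1:ℝ)/4 - 1) * (b ^ 7)⁻¹) * w2| := abs_add_le _ _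
    _ ≤ 17 := by linarith

lemma LG1_apply (p : Heis) (v : Heis) : LG1 p v =
    (bracket p ^ 3)⁻¹ * LN1 p v + N1 p * (((1:ℝ)/4 - 1) * (bracket p ^ 7)⁻¹) * LF p v := by
  simp only [LG1, ContinuousLinearMap.add_apply, ContinuousLinearMap.smul_apply, smul_eq_mul,
    Fp_rpow_m34, Fp_rpow_m74]

lemma LG2_apply (p : Heis) (v : Heis) : LG2 p v =
    (bracket p ^ 3)⁻¹ * LN2 p v + N2 p * (((1:ℝ)/4 - 1) * (bracket p ^ 7)⁻¹) * LF p v := by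
  simp only [LG2, ContinuousLinearMap.add_apply, ContinuousLinearMap.smul_apply, smul_eq_mul,
    Fp_rpow_m34, Fp_rpow_m74]

lemma abs_LG1_v1_le (p : Heis) : |LG1 p (v1 p)| ≤ 17 := by
  rw [LG1_apply]
  exact main_bound (one_le_bracket p) (abs_LN1_v1_le p) (abs_N1_le p) (abs_LF_v1_le p)
lemma abs_LG1_v2_le (p : Heis) : |LG1 p (v2 p)| ≤ 17 := by
  rw [LG1_apply]
  exact main_bound (one_le_bracket p) (abs_LN1_v2_le p) (abs_N1_le p) (abs_LF_v2_le p)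
lemma abs_LG2_v1_le (p : Heis) : |LG2 p (v1 p)| ≤ 17 := by
  rw [LG2_apply]
  exact main_bound (one_le_bracket p) (abs_LN2_v1_le p) (abs_N2_le p) (abs_LF_v1_le p)
lemma abs_LG2_v2_le (p : Heis) : |LG2 p (v2 p)| ≤ 17 := by
  rw [LG2_apply]
  exact main_bound (one_le_bracket p) (abs_LN2_v2_le p) (abs_N2_le p) (abs_LF_v2_le p)

lemma hE (c β : ℝ) (p : Heis) : HasFDerivAt (fun q : Heis => Real.exp (c + β * bracket q))
    ((Real.exp (c + β * bracket p) * β) • Lb p) p := by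
  have h1 : HasFDerivAt (fun q : Heis => c + β * bracket q) (β • Lb p) p :=
    ((hbracket p).const_mul β).const_add c
  have h2 := h1.exp
  rwa [smul_smul] at h2

lemma hw (a c β r : ℝ) (p : Heis) :
    HasFDerivAt (fun q : Heis => a * Real.exp (c + β * bracket q) + r)
      ((a * (Real.exp (c + β * bracket p) * β)) • Lb p) p := by
  have h := ((hE c β p).const_mul a).add_const r
  rwa [smul_smul] at h

lemma X1_w (a c β r : ℝ) (p : Heis) :
    X1 (fun q => a * Real.exp (c + β * bracket q) + r) p
      = a * β * Real.exp (c + β * bracket p) * G1 p := by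
  unfold X1
  rw [(hw a c β r p).fderiv, show ((1:ℝ), (0:ℝ), -p.2.1 / 2) = v1 p from rfl]
  rw [ContinuousLinearMap.smul_apply, smul_eq_mul, Lb_v1]
  ring

lemma X2_w (a c β r : ℝ) (p : Heis) :
    X2 (fun q => a * Real.exp (c + β * bracket q) + r) p
      = a * β * Real.exp (c + β * bracket p) * G2 p := by
  unfold X2
  rw [(hw a c β r p).fderiv, show ((0:ℝ), (1:ℝ), p.1 / 2) = v2 p from rfl]
  rw [ContinuousLinearMap.smul_apply, smul_eq_mul, Lb_v2]
  ring

lemma hW (a c β r : ℝ) (Gf : Heis → ℝ) (LG : Heis → (Heis →L[ℝ] ℝ))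
    (hGf : ∀ q, HasFDerivAt Gf (LG q) q) (p : Heis) :
    HasFDerivAt (fun q => a * β * (Real.exp (c + β * bracket q) * Gf q))
      ((a * β) • (Real.exp (c + β * bracket p) • LG p
        + Gf p • (Real.exp (c + β * bracket p) * β) • Lb p)) p :=
  ((hE c β p).mul (hGf p)).const_mul (a * β)

lemma X1X1_w (a c β r : ℝ) (p : Heis) :
    X1 (X1 (fun q => a * Real.exp (c + β * bracket q) + r)) p
      = a * β * Real.exp (c + β * bracket p) * (β * G1 p * G1 p + LG1 p (v1 p)) := by
  have hfun : X1 (fun q => a * Real.exp (c + β * bracket q) + r)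
      = fun q => a * β * (Real.exp (c + β * bracket q) * G1 q) := by
    funext q; rw [X1_w]; ring
  rw [hfun]
  unfold X1
  rw [(hW a c β r G1 LG1 hG1 p).fderiv, show ((1:ℝ), (0:ℝ), -p.2.1 / 2) = v1 p from rfl]
  simp only [ContinuousLinearMap.smul_apply, ContinuousLinearMap.add_apply, smul_eq_mul, Lb_v1]
  ring

lemma X2X1_w (a c β r : ℝ) (p : Heis) :
    X2 (X1 (fun q => a * Real.exp (c + β * bracket q) + r)) p
      = a * β * Real.exp (c + β * bracket p) * (β * G2 p * G1 p + LG1 p (v2 p)) := by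
  have hfun : X1 (fun q => a * Real.exp (c + β * bracket q) + r)
      = fun q => a * β * (Real.exp (c + β * bracket q) * G1 q) := by
    funext q; rw [X1_w]; ring
  rw [hfun]
  unfold X2
  rw [(hW a c β r G1 LG1 hG1 p).fderiv, show ((0:ℝ), (1:ℝ), p.1 / 2) = v2 p from rfl]
  simp only [ContinuousLinearMap.smul_apply, ContinuousLinearMap.add_apply, smul_eq_mul, Lb_v2]
  ring

lemma X1X2_w (a c β r : ℝ) (p : Heis) :
    X1 (X2 (fun q => a * Real.exp (c + β * bracket q) + r)) p
      = a * β * Real.exp (c + β * bracket p) * (β * G1 p * G2 p + LG2 p (v1 p)) := by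
  have hfun : X2 (fun q => a * Real.exp (c + β * bracket q) + r)
      = fun q => a * β * (Real.exp (c + β * bracket q) * G2 q) := by
    funext q; rw [X2_w]; ring
  rw [hfun]
  unfold X1
  rw [(hW a c β r G2 LG2 hG2 p).fderiv, show ((1:ℝ), (0:ℝ), -p.2.1 / 2) = v1 p from rfl]
  simp only [ContinuousLinearMap.smul_apply, ContinuousLinearMap.add_apply, smul_eq_mul, Lb_v1]
  ring

lemma X2X2_w (a c β r : ℝ) (p : Heis) :
    X2 (X2 (fun q => a * Real.exp (c + β * bracket q) + r)) p
      = a * β * Real.exp (c + β * bracket p) * (β * G2 p * G2 p + LG2 p (v2 p)) := by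
  have hfun : X2 (fun q => a * Real.exp (c + β * bracket q) + r)
      = fun q => a * β * (Real.exp (c + β * bracket q) * G2 q) := by
    funext q; rw [X2_w]; ring
  rw [hfun]
  unfold X2
  rw [(hW a c β r G2 LG2 hG2 p).fderiv, show ((0:ℝ), (1:ℝ), p.1 / 2) = v2 p from rfl]
  simp only [ContinuousLinearMap.smul_apply, ContinuousLinearMap.add_apply, smul_eq_mul, Lb_v2]
  ring

lemma sqrt_pair_le {x y c : ℝ} (hc : 0 ≤ c) (hx : |x| ≤ c) (hy : |y| ≤ c) :
    Real.sqrt (x ^ 2 + y ^ 2) ≤ 2 * c := by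
  have h1 : x ^ 2 + y ^ 2 ≤ (2 * c) ^ 2 := by
    nlinarith [sq_abs x, sq_abs y, abs_nonneg x, abs_nonneg y]
  calc Real.sqrt (x ^ 2 + y ^ 2) ≤ Real.sqrt ((2 * c) ^ 2) := Real.sqrt_le_sqrt h1
    _ = 2 * c := Real.sqrt_sq (by linarith)

lemma term_bound {a m P K : ℝ} (hP : 0 ≤ P) (hK : 0 ≤ K) (hm : |m| ≤ K) :
    |a * (P * m)| ≤ |a| * (K * P) := by
  rw [abs_mul, abs_mul, abs_of_nonneg hP]
  calc |a| * (P * |m|) ≤ |a| * (P * K) := by gcongr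
    _ = |a| * (K * P) := by ring

end ExpBarrier

set_option maxHeartbeats 1000000 in
open ExpBarrier in
/-- The barrier `ū(p,t) = C e^(αt + β⟨p⟩) + C_f t` is a classical supersolution, and
`u̲ = -ū` is a classical subsolution, of `u_t - tr(A (∇_H²u)*) + f(p, ∇_H u) = 0` on
`ℍ × (0,∞)`, provided `α` is large enough (depending on `C`, `β`). -/
theorem exponential_barriers (A : Matrix (Fin 2) (Fin 2) ℝ) (hA : A.PosSemidef)
    (Cf : ℝ) (hCf : 0 < Cf) (f : Heis → ℝ × ℝ → ℝ)
    (hf : ∀ p : Heis, ∀ ξ : ℝ × ℝ, |f p ξ| ≤ Cf * (1 + Real.sqrt (ξ.1 ^ 2 + ξ.2 ^ 2))) :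
    ∀ C : ℝ, 0 < C → ∀ β : ℝ, 0 < β → ∃ α₀ : ℝ, 0 < α₀ ∧ ∀ α : ℝ, α₀ ≤ α →
      ∀ p : Heis, ∀ t : ℝ, 0 < t →
        0 ≤ deriv (fun s : ℝ => C * Real.exp (α * s + β * bracket p) + Cf * s) t
            - (A * hessH (fun q => C * Real.exp (α * t + β * bracket q) + Cf * t) p).trace
            + f p (X1 (fun q => C * Real.exp (α * t + β * bracket q) + Cf * t) p,
                   X2 (fun q => C * Real.exp (α * t + β * bracket q) + Cf * t) p) ∧
        deriv (fun s : ℝ => -(C * Real.exp (α * s + β * bracket p)) - Cf * s) t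
            - (A * hessH (fun q => -(C * Real.exp (α * t + β * bracket q)) - Cf * t) p).trace
            + f p (X1 (fun q => -(C * Real.exp (α * t + β * bracket q)) - Cf * t) p,
                   X2 (fun q => -(C * Real.exp (α * t + β * bracket q)) - Cf * t) p) ≤ 0 := by
  intro C hC β hβ
  have habs0 : (0:ℝ) ≤ |A 0 0| + |A 0 1| + |A 1 0| + |A 1 1| := by positivity
  have hK0 : (0:ℝ) < 4 * β + 17 := by linarith
  refine ⟨β * ((|A 0 0| + |A 0 1| + |A 1 0| + |A 1 1|) * (4 * β + 17) + 4 * Cf) + 1, ?_, ?_⟩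
  · have h0 : 0 ≤ β * ((|A 0 0| + |A 0 1| + |A 1 0| + |A 1 1|) * (4 * β + 17) + 4 * Cf) :=
      mul_nonneg hβ.le (by nlinarith)
    linarith
  intro α hα p t ht
  have hE0 : (0:ℝ) < Real.exp (α * t + β * bracket p) := Real.exp_pos _
  have hCE : (0:ℝ) < C * Real.exp (α * t + β * bracket p) := mul_pos hC hE0
  have hP0 : (0:ℝ) ≤ C * β * Real.exp (α * t + β * bracket p) :=
    mul_nonneg (mul_nonneg hC.le hβ.le) hE0.le
  have hG1b := abs_G1_le p
  have hG2b := abs_G2_le p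
  have hD11 := abs_LG1_v1_le p
  have hD21 := abs_LG1_v2_le p
  have hD12 := abs_LG2_v1_le p
  have hD22 := abs_LG2_v2_le p
  have key : (C * Real.exp (α * t + β * bracket p)) *
      (β * ((|A 0 0| + |A 0 1| + |A 1 0| + |A 1 1|) * (4 * β + 17) + 4 * Cf) + 1)
      ≤ (C * Real.exp (α * t + β * bracket p)) * α :=
    mul_le_mul_of_nonneg_left hα hCE.le
  have trace_eq : ∀ M : Matrix (Fin 2) (Fin 2) ℝ,
      (A * M).trace = A 0 0 * M 0 0 + A 0 1 * M 1 0 + A 1 0 * M 0 1 + A 1 1 * M 1 1 := by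
    intro M
    simp [Matrix.trace_fin_two, Matrix.mul_apply, Fin.sum_univ_two]
    ring
  have hGG : ∀ g h D : ℝ, |g| ≤ 2 → |h| ≤ 2 → |D| ≤ 17 → |β * g * h + D| ≤ 4 * β + 17 := by
    intro g h D hg hh hD
    have h4 : |g| * |h| ≤ 4 := by nlinarith [abs_nonneg g, abs_nonneg h]
    have h5 : |β * g * h| = β * (|g| * |h|) := by
      rw [abs_mul, abs_mul, abs_of_nonneg hβ.le]; ring
    calc |β * g * h + D| ≤ |β * g * h| + |D| := abs_add_le _ _
      _ ≤ 4 * β + 17 := by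
        rw [h5]; nlinarith [mul_le_mul_of_nonneg_left h4 hβ.le]
  have em11 := hGG (G1 p) (G1 p) (LG1 p (v1 p)) hG1b hG1b hD11
  have em22 := hGG (G2 p) (G2 p) (LG2 p (v2 p)) hG2b hG2b hD22
  have em12 := hGG (G1 p) (G2 p) (LG2 p (v1 p)) hG1b hG2b hD12
  have em21 := hGG (G2 p) (G1 p) (LG1 p (v2 p)) hG2b hG1b hD21
  have emoff : |((β * G1 p * G2 p + LG2 p (v1 p)) + (β * G2 p * G1 p + LG1 p (v2 p))) / 2|
      ≤ 4 * β + 17 := by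
    rw [abs_div]
    have h2 : |(2:ℝ)| = 2 := by norm_num
    rw [h2]
    have := abs_add_le (β * G1 p * G2 p + LG2 p (v1 p)) (β * G2 p * G1 p + LG1 p (v2 p))
    linarith
  have habsG : ∀ g : ℝ, |g| ≤ 2 →
      |C * β * Real.exp (α * t + β * bracket p) * g|
        ≤ 2 * (C * β * Real.exp (α * t + β * bracket p)) := by
    intro g hg
    rw [abs_mul, abs_of_nonneg hP0]
    nlinarith [mul_le_mul_of_nonneg_left hg hP0]
  have hub : ∀ a m : ℝ, |m| ≤ 4 * β + 17 →
      a * (C * β * Real.exp (α * t + β * bracket p) * m)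
        ≤ |a| * ((4 * β + 17) * (C * β * Real.exp (α * t + β * bracket p))) := by
    intro a m hm
    exact le_trans (le_abs_self _) (term_bound (a := a) hP0 hK0.le hm)
  have hlb : ∀ a m : ℝ, |m| ≤ 4 * β + 17 →
      -(|a| * ((4 * β + 17) * (C * β * Real.exp (α * t + β * bracket p))))
        ≤ a * (C * β * Real.exp (α * t + β * bracket p) * m) := by
    intro a m hm
    have h := term_bound (a := a) hP0 hK0.le hm
    have h2 := neg_abs_le (a * (C * β * Real.exp (α * t + β * bracket p) * m))
    linarith
  have hderiv_aux : HasDerivAt (fun s : ℝ => α * s + β * bracket p) α t := by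
    simpa using ((hasDerivAt_id t).const_mul α).add_const (β * bracket p)
  constructor
  · -- supersolution
    have hd : deriv (fun s : ℝ => C * Real.exp (α * s + β * bracket p) + Cf * s) t
        = C * (Real.exp (α * t + β * bracket p) * α) + Cf := by
      have h2 : HasDerivAt (fun s : ℝ => C * Real.exp (α * s + β * bracket p) + Cf * s)
          (C * (Real.exp (α * t + β * bracket p) * α) + Cf) t := by
        have h3 := (hderiv_aux.exp.const_mul C).add ((hasDerivAt_id t).const_mul Cf)
        exact h3.congr_deriv (by ring)
      exact h2.deriv
    rw [hd, trace_eq]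
    simp only [hessH, Matrix.of_apply, Matrix.cons_val', Matrix.cons_val_zero, Matrix.cons_val_one,
      Matrix.head_cons, Matrix.head_fin_const, Matrix.empty_val', Matrix.cons_val_fin_one]
    rw [X1X1_w C (α * t) β (Cf * t) p, X1X2_w C (α * t) β (Cf * t) p,
      X2X1_w C (α * t) β (Cf * t) p, X2X2_w C (α * t) β (Cf * t) p,
      X1_w C (α * t) β (Cf * t) p, X2_w C (α * t) β (Cf * t) p]
    have hsx := habsG (G1 p) hG1b
    have hsy := habsG (G2 p) hG2b
    have hsq : Real.sqrt ((C * β * Real.exp (α * t + β * bracket p) * G1 p) ^ 2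
        + (C * β * Real.exp (α * t + β * bracket p) * G2 p) ^ 2)
        ≤ 4 * (C * β * Real.exp (α * t + β * bracket p)) := by
      have h := sqrt_pair_le (by positivity) hsx hsy
      linarith
    have hflow : -(Cf * (1 + 4 * (C * β * Real.exp (α * t + β * bracket p))))
        ≤ f p (C * β * Real.exp (α * t + β * bracket p) * G1 p,
               C * β * Real.exp (α * t + β * bracket p) * G2 p) := by
      have habs := hf p (C * β * Real.exp (α * t + β * bracket p) * G1 p,
               C * β * Real.exp (α * t + β * bracket p) * G2 p)
      have hn := neg_abs_le (f p (C * β * Real.exp (α * t + β * bracket p) * G1 p,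
               C * β * Real.exp (α * t + β * bracket p) * G2 p))
      dsimp only at habs
      nlinarith [hCf.le, hsq]
    have t1 := hub (A 0 0) (β * G1 p * G1 p + LG1 p (v1 p)) em11
    have t4 := hub (A 1 1) (β * G2 p * G2 p + LG2 p (v2 p)) em22
    have t2 := hub (A 0 1) (((β * G1 p * G2 p + LG2 p (v1 p))
        + (β * G2 p * G1 p + LG1 p (v2 p))) / 2) emoff
    have t3 := hub (A 1 0) (((β * G1 p * G2 p + LG2 p (v1 p))
        + (β * G2 p * G1 p + LG1 p (v2 p))) / 2) emoff
    linarith [t1, t2, t3, t4, hflow, key]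
  · -- subsolution
    have hrw : (fun q : Heis => -(C * Real.exp (α * t + β * bracket q)) - Cf * t)
        = fun q => (-C) * Real.exp (α * t + β * bracket q) + (-(Cf * t)) := by
      funext q; ring
    have hd : deriv (fun s : ℝ => -(C * Real.exp (α * s + β * bracket p)) - Cf * s) t
        = -(C * (Real.exp (α * t + β * bracket p) * α)) - Cf := by
      have h2 : HasDerivAt (fun s : ℝ => -(C * Real.exp (α * s + β * bracket p)) - Cf * s)
          (-(C * (Real.exp (α * t + β * bracket p) * α)) - Cf) t := by
        have h3 := ((hderiv_aux.exp.const_mul C).neg).sub ((hasDerivAt_id t).const_mul Cf)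
        exact h3.congr_deriv (by ring)
      exact h2.deriv
    rw [hd, hrw, trace_eq]
    simp only [hessH, Matrix.of_apply, Matrix.cons_val', Matrix.cons_val_zero, Matrix.cons_val_one,
      Matrix.head_cons, Matrix.head_fin_const, Matrix.empty_val', Matrix.cons_val_fin_one]
    rw [X1X1_w (-C) (α * t) β (-(Cf * t)) p, X1X2_w (-C) (α * t) β (-(Cf * t)) p,
      X2X1_w (-C) (α * t) β (-(Cf * t)) p, X2X2_w (-C) (α * t) β (-(Cf * t)) p,
      X1_w (-C) (α * t) β (-(Cf * t)) p, X2_w (-C) (α * t) β (-(Cf * t)) p]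
    have hsx : |(-C) * β * Real.exp (α * t + β * bracket p) * G1 p|
        ≤ 2 * (C * β * Real.exp (α * t + β * bracket p)) := by
      have h := habsG (G1 p) hG1b
      have e : |(-C) * β * Real.exp (α * t + β * bracket p) * G1 p|
          = |C * β * Real.exp (α * t + β * bracket p) * G1 p| := by
        rw [abs_mul, abs_mul, abs_mul, abs_neg, ← abs_mul, ← abs_mul, ← abs_mul]
      rw [e]; exact h
    have hsy : |(-C) * β * Real.exp (α * t + β * bracket p) * G2 p|
        ≤ 2 * (C * β * Real.exp (α * t + β * bracket p)) := by
      have h := habsG (G2 p) hG2b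
      have e : |(-C) * β * Real.exp (α * t + β * bracket p) * G2 p|
          = |C * β * Real.exp (α * t + β * bracket p) * G2 p| := by
        rw [abs_mul, abs_mul, abs_mul, abs_neg, ← abs_mul, ← abs_mul, ← abs_mul]
      rw [e]; exact h
    have hsq : Real.sqrt (((-C) * β * Real.exp (α * t + β * bracket p) * G1 p) ^ 2
        + ((-C) * β * Real.exp (α * t + β * bracket p) * G2 p) ^ 2)
        ≤ 4 * (C * β * Real.exp (α * t + β * bracket p)) := by
      have h := sqrt_pair_le (by positivity) hsx hsy
      linarith
    have hfup : f p ((-C) * β * Real.exp (α * t + β * bracket p) * G1 p,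
               (-C) * β * Real.exp (α * t + β * bracket p) * G2 p)
        ≤ Cf * (1 + 4 * (C * β * Real.exp (α * t + β * bracket p))) := by
      have habs := hf p ((-C) * β * Real.exp (α * t + β * bracket p) * G1 p,
               (-C) * β * Real.exp (α * t + β * bracket p) * G2 p)
      have hle := le_abs_self (f p ((-C) * β * Real.exp (α * t + β * bracket p) * G1 p,
               (-C) * β * Real.exp (α * t + β * bracket p) * G2 p))
      dsimp only at habs
      nlinarith [hCf.le, hsq]
    have t1 := hub (A 0 0) (β * G1 p * G1 p + LG1 p (v1 p)) em11
    have t4 := hub (A 1 1) (β * G2 p * G2 p + LG2 p (v2 p)) em22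
    have t2 := hub (A 0 1) (((β * G1 p * G2 p + LG2 p (v1 p))
        + (β * G2 p * G1 p + LG1 p (v2 p))) / 2) emoff
    have t3 := hub (A 1 0) (((β * G1 p * G2 p + LG2 p (v1 p))
        + (β * G2 p * G1 p + LG1 p (v2 p))) / 2) emoff
    linarith [t1, t2, t3, t4, hfup, key]
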